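/- Fix an integer g ≥ 1. There exists a family of polynomials P_{m,k} in 2g+1 variables over ℂ, indexed by m ≥ g and k ≥ −g, depending only on (g,m,k) and not on the chain, such that every genus-g chain satisfies H^{2m+1}_{2k+1} = P_{m,k}(H^{2g+1}_{1−2g}, H^{2g+1}_{3−2g}, …, H^{2g+1}_{2g+1}) for all m ≥ g and k ≥ −g. In other words, a genus-g chain is completely determined by the 2g+1 values H^{2g+1}_{1−2g}, …, H^{2g+1}_{2g+1} through universal polynomial formulas (the subvariety W_{gc} has dimension 2g+1). -/
import Mathlib


/-- Genus-g chain (stratum Σ_{2g} of Gr^(2)): `H a b` represents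
`H^{2(a+g)+1}_{2(b−g)+1}`, i.e. row index `2m+1` with `m = a+g ≥ g` and column
index `2k+1` with `k = b−g ≥ −g`.
(Cg1) says `p_{2g+1}² = λ^{2g+1} + ∑_{j=0}^{2g} u_j λ^j` (hyperelliptic curve
condition): for `n ≥ 1`, `2H^{2g+1}_{2(g+n)+1} + ∑_{k=−g}^{n−1+g}
H^{2g+1}_{2k+1}·H^{2g+1}_{2(n−1−k)+1} = 0`.
(Cg2) says `p_{2m+3} = λ·p_{2m+1} − H^{2m+1}_{1−2g}·p_{2g+1}`:
`H^{2m+3}_{2k+1} = H^{2m+1}_{2k+3} − H^{2m+1}_{1−2g}·H^{2g+1}_{2k+1}`. -/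
def GenusChain (g : ℕ) (H : ℕ → ℕ → ℂ) : Prop :=
  (∀ n : ℕ, 1 ≤ n →
    2 * H 0 (2 * g + n)
      + ∑ i ∈ Finset.range (n + 2 * g), H 0 i * H 0 (n - 1 + 2 * g - i) = 0) ∧
  (∀ a b : ℕ, H (a + 1) b = H a (b + 1) - H a 0 * H 0 b)

/-- Universal polynomials for row 0. -/
noncomputable def genusQ (g : ℕ) : ℕ → MvPolynomial (Fin (2 * g + 1)) ℂ
  | n =>
    if h : n ≤ 2 * g then MvPolynomial.X ⟨n, by omega⟩
    else
      -(MvPolynomial.C (2⁻¹ : ℂ)) *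
        ∑ i ∈ (Finset.range n).attach, genusQ g i * genusQ g (n - 1 - i)
  decreasing_by
  · exact Finset.mem_range.mp i.2
  · have := Finset.mem_range.mp i.2; omega

/-- Universal polynomials for all rows. -/
noncomputable def genusP (g : ℕ) : ℕ → ℕ → MvPolynomial (Fin (2 * g + 1)) ℂ
  | 0, b => genusQ g b
  | a + 1, b => genusP g a (b + 1) - genusP g a 0 * genusQ g b

/-- A genus-g chain is completely determined by the `2g+1` values
`H^{2g+1}_{1−2g}, …, H^{2g+1}_{2g+1}` (i.e. `H 0 0, …, H 0 (2g)`) through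
universal polynomial formulas: the subvariety `W_{gc}` has dimension `2g+1`. -/
theorem genusChain_dimension (g : ℕ) (hg : 1 ≤ g) :
    ∃ P : ℕ → ℕ → MvPolynomial (Fin (2 * g + 1)) ℂ,
      ∀ H : ℕ → ℕ → ℂ, GenusChain g H →
        ∀ a b : ℕ, H a b = MvPolynomial.eval (fun i : Fin (2 * g + 1) => H 0 (i : ℕ)) (P a b) := by
  refine ⟨genusP g, fun H hH => ?_⟩
  obtain ⟨h1, h2⟩ := hH
  set v : Fin (2 * g + 1) → ℂ := fun i => H 0 (i : ℕ) with hv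
  have hrow0 : ∀ n : ℕ, H 0 n = MvPolynomial.eval v (genusQ g n) := by
    intro n
    induction n using Nat.strong_induction_on with
    | _ n ih =>
      rw [genusQ]
      by_cases h : n ≤ 2 * g
      · simp [h, hv]
      · rw [dif_neg h]
        push_neg at h
        have key := h1 (n - 2 * g) (by omega)
        have e1 : 2 * g + (n - 2 * g) = n := by omega
        have e2 : n - 2 * g + 2 * g = n := by omega
        rw [e1, e2] at key
        have e3 : ∀ i ∈ Finset.range n,
            H 0 i * H 0 (n - 2 * g - 1 + 2 * g - i)
              = MvPolynomial.eval v (genusQ g i) * MvPolynomial.eval v (genusQ g (n - 1 - i)) := by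
          intro i hi
          have hi' := Finset.mem_range.mp hi
          have : n - 2 * g - 1 + 2 * g - i = n - 1 - i := by omega
          rw [this, ih i hi', ih (n - 1 - i) (by omega)]
        rw [Finset.sum_congr rfl e3] at key
        have : H 0 n = -(2⁻¹ : ℂ) *
            ∑ i ∈ Finset.range n,
              MvPolynomial.eval v (genusQ g i) * MvPolynomial.eval v (genusQ g (n - 1 - i)) := by
          have h2ne : (2 : ℂ) ≠ 0 := two_ne_zero
          field_simp
          linear_combination key
        rw [this]
        simp [Finset.sum_attach (Finset.range n)
          (fun i => genusQ g i * genusQ g (n - 1 - i))]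
  intro a
  induction a with
  | zero => intro b; rw [genusP]; exact hrow0 b
  | succ a ih =>
    intro b
    rw [genusP, h2 a b, ih (b + 1), ih 0, hrow0 b]
    simp
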